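/- For every positive definite matrix D and matrix X of the same size, ∫₀^∞ (D+tI)^{-1}·(DX − XD)·(D+tI)^{-1} dt = (log D)·X − X·(log D). -/

import Mathlib

open MeasureTheory Set Filter Topology

lemma key_integrable_real {a b : ℝ} (ha : 0 < a) (hb : 0 < b) :
    IntegrableOn (fun t : ℝ => (a + t)⁻¹ * (a - b) * (b + t)⁻¹) (Ioi 0) := by
  have hcont : ContinuousOn (fun t : ℝ => (a + t)⁻¹ * (a - b) * (b + t)⁻¹) (Icc 0 1) := by
    refine ContinuousOn.mul (ContinuousOn.mul ?_ continuousOn_const) ?_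
    · exact (continuousOn_const.add continuousOn_id).inv₀ fun t ht => by
        show a + t ≠ 0; exact ne_of_gt (by nlinarith [ht.1])
    · exact (continuousOn_const.add continuousOn_id).inv₀ fun t ht => by
        show b + t ≠ 0; exact ne_of_gt (by nlinarith [ht.1])
  have h1 : IntegrableOn (fun t : ℝ => (a + t)⁻¹ * (a - b) * (b + t)⁻¹) (Ioc 0 1) :=
    (hcont.integrableOn_compact isCompact_Icc).mono_set Ioc_subset_Icc_self
  have h2 : IntegrableOn (fun t : ℝ => (a + t)⁻¹ * (a - b) * (b + t)⁻¹) (Ioi 1) := by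
    have hmaj : IntegrableOn (fun t : ℝ => |a - b| * t ^ (-2 : ℝ)) (Ioi 1) :=
      (integrableOn_Ioi_rpow_of_lt (by norm_num) one_pos).const_mul _
    refine Integrable.mono' hmaj ?_ ?_
    · refine (ContinuousOn.aestronglyMeasurable ?_ measurableSet_Ioi)
      refine ContinuousOn.mul (ContinuousOn.mul ?_ continuousOn_const) ?_
      · exact (continuousOn_const.add continuousOn_id).inv₀ fun t ht => by
          have := mem_Ioi.mp ht; show a + t ≠ 0; exact ne_of_gt (by nlinarith)
      · exact (continuousOn_const.add continuousOn_id).inv₀ fun t ht => by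
          have := mem_Ioi.mp ht; show b + t ≠ 0; exact ne_of_gt (by nlinarith)
    · filter_upwards [ae_restrict_mem measurableSet_Ioi] with t ht
      have ht1 : (1 : ℝ) < t := ht
      have hat : 0 < a + t := by linarith
      have hbt : 0 < b + t := by linarith
      rw [Real.norm_eq_abs, abs_mul, abs_mul, abs_inv, abs_inv, abs_of_pos hat, abs_of_pos hbt,
        Real.rpow_neg (by linarith), Real.rpow_two]
      rw [mul_comm (|a - b|) _]
      have h1 : (a + t)⁻¹ ≤ t⁻¹ := inv_anti₀ (by linarith) (by linarith)
      have h2 : (b + t)⁻¹ ≤ t⁻¹ := inv_anti₀ (by linarith) (by linarith)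
      have key : (a+t)⁻¹ * (b+t)⁻¹ ≤ (t ^ 2)⁻¹ :=
        calc (a+t)⁻¹ * (b+t)⁻¹ ≤ t⁻¹ * t⁻¹ := by
              apply mul_le_mul h1 h2 (by positivity) (by positivity)
          _ = (t * t)⁻¹ := (mul_inv _ _).symm
          _ = (t ^ 2)⁻¹ := by rw [sq]
      calc (a+t)⁻¹ * |a - b| * (b+t)⁻¹ = ((a+t)⁻¹ * (b+t)⁻¹) * |a - b| := by ring
        _ ≤ (t ^ 2)⁻¹ * |a - b| := mul_le_mul_of_nonneg_right key (abs_nonneg _)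
  have := h1.union h2
  rwa [Ioc_union_Ioi_eq_Ioi (by norm_num : (0:ℝ) ≤ 1)] at this

lemma key_real {a b : ℝ} (ha : 0 < a) (hb : 0 < b) :
    ∫ t in Ioi (0:ℝ), (a + t)⁻¹ * (a - b) * (b + t)⁻¹ = Real.log a - Real.log b := by
  have hderiv : ∀ x ∈ Ioi (0:ℝ), HasDerivAt (fun t => Real.log (b + t) - Real.log (a + t))
      ((a + x)⁻¹ * (a - b) * (b + x)⁻¹) x := by
    intro x hx
    have hx0 : (0:ℝ) < x := hx
    have hax : (0:ℝ) < a + x := by linarith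
    have hbx : (0:ℝ) < b + x := by linarith
    have h1 : HasDerivAt (fun t : ℝ => Real.log (b + t)) (1 / (b + x)) x := by
      simpa using (((hasDerivAt_id x).const_add b).log hbx.ne')
    have h2 : HasDerivAt (fun t : ℝ => Real.log (a + t)) (1 / (a + x)) x := by
      simpa using (((hasDerivAt_id x).const_add a).log hax.ne')
    have heq : 1 / (b + x) - 1 / (a + x) = (a + x)⁻¹ * (a - b) * (b + x)⁻¹ := by
      rw [div_sub_div _ _ hbx.ne' hax.ne',
        show 1 * (a + x) - (b + x) * 1 = a - b by ring, div_eq_mul_inv, mul_inv]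
      ring
    exact heq ▸ (h1.sub h2)
  have htend : Tendsto (fun t => Real.log (b + t) - Real.log (a + t)) atTop (𝓝 0) := by
    have h1 : Tendsto (fun t : ℝ => 1 + (b - a) / (a + t)) atTop (𝓝 1) := by
      have := Tendsto.const_div_atTop
        (tendsto_atTop_add_const_left atTop a tendsto_id) (b - a)
      simpa using (tendsto_const_nhds.add this)
    have h2 : Tendsto (fun t : ℝ => Real.log (1 + (b - a) / (a + t))) atTop (𝓝 0) := by
      have := (Real.continuousAt_log one_ne_zero).tendsto.comp h1
      simpa [Function.comp_def] using this
    refine h2.congr' ?_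
    filter_upwards [eventually_gt_atTop 0] with t ht
    have hax : (0:ℝ) < a + t := by linarith
    have hbx : (0:ℝ) < b + t := by linarith
    rw [show 1 + (b - a) / (a + t) = (b + t) / (a + t) by field_simp; ring]
    rw [Real.log_div hbx.ne' hax.ne']
  have hcont : ContinuousWithinAt (fun t => Real.log (b + t) - Real.log (a + t)) (Ici 0) 0 := by
    apply ContinuousAt.continuousWithinAt
    exact ((Real.continuousAt_log (by positivity)).comp (by fun_prop)).sub
      ((Real.continuousAt_log (by positivity)).comp (by fun_prop))
  have := integral_Ioi_of_hasDerivAt_of_tendsto hcont hderiv (key_integrable_real ha hb) htend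
  rw [this]
  simp

lemma key_complex {a b : ℝ} (ha : 0 < a) (hb : 0 < b) :
    ∫ t in Ioi (0:ℝ), ((a:ℂ) + t)⁻¹ * ((a:ℂ) - b) * ((b:ℂ) + t)⁻¹
      = (Real.log a : ℂ) - Real.log b := by
  have h0 : (fun t : ℝ => ((a:ℂ) + t)⁻¹ * ((a:ℂ) - b) * ((b:ℂ) + t)⁻¹)
      = fun t : ℝ => (((a + t)⁻¹ * (a - b) * (b + t)⁻¹ : ℝ) : ℂ) := by
    funext t; push_cast; ring
  have h2 : (∫ t in Ioi (0:ℝ), ((((a + t)⁻¹ * (a - b) * (b + t)⁻¹ : ℝ)) : ℂ))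
      = ((∫ t in Ioi (0:ℝ), (a + t)⁻¹ * (a - b) * (b + t)⁻¹ : ℝ) : ℂ) := integral_ofReal
  rw [h0, h2, key_real ha hb]
  push_cast; ring

lemma key_integrable_complex {a b : ℝ} (ha : 0 < a) (hb : 0 < b) :
    IntegrableOn (fun t : ℝ => ((a:ℂ) + t)⁻¹ * ((a:ℂ) - b) * ((b:ℂ) + t)⁻¹) (Ioi 0) := by
  have h0 : (fun t : ℝ => ((a:ℂ) + t)⁻¹ * ((a:ℂ) - b) * ((b:ℂ) + t)⁻¹)
      = fun t : ℝ => (((a + t)⁻¹ * (a - b) * (b + t)⁻¹ : ℝ) : ℂ) := by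
    funext t; push_cast; ring
  rw [h0]
  exact (key_integrable_real ha hb).ofReal

open scoped ComplexOrder

attribute [local instance] Matrix.frobeniusNormedAddCommGroup Matrix.frobeniusNormedSpace

/-- Apply a real function to a Hermitian matrix via the spectral decomposition
(functional calculus); used here for the matrix logarithm. -/
noncomputable def hermApply {n : ℕ} (k : ℝ → ℝ) (A : Matrix (Fin n) (Fin n) ℂ)
    (hA : A.IsHermitian) : Matrix (Fin n) (Fin n) ℂ :=
  (hA.eigenvectorUnitary : Matrix (Fin n) (Fin n) ℂ) *
    Matrix.diagonal (fun i => (k (hA.eigenvalues i) : ℂ)) *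
    star (hA.eigenvectorUnitary : Matrix (Fin n) (Fin n) ℂ)

theorem stmt_19 {d : ℕ} (D X : Matrix (Fin d) (Fin d) ℂ) (hD : D.PosDef) :
    ∫ t in Set.Ioi (0 : ℝ),
        (D + (t : ℂ) • 1)⁻¹ * (D * X - X * D) * (D + (t : ℂ) • 1)⁻¹ =
      hermApply Real.log D hD.isHermitian * X - X * hermApply Real.log D hD.isHermitian := by
  classical
  set hH := hD.isHermitian with hhH
  set U : Matrix (Fin d) (Fin d) ℂ := (hH.eigenvectorUnitary : Matrix (Fin d) (Fin d) ℂ)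
    with hUdef
  have hU1 : U * star U = 1 := Matrix.mem_unitaryGroup_iff.mp hH.eigenvectorUnitary.2
  have hU2 : star U * U = 1 := Matrix.mem_unitaryGroup_iff'.mp hH.eigenvectorUnitary.2
  set l : Fin d → ℝ := hH.eigenvalues with hldef
  have hlpos : ∀ i, 0 < l i := fun i => hD.eigenvalues_pos i
  set Y := star U * X * U with hYdef
  have hX : X = U * Y * star U := by
    rw [hYdef, ← Matrix.mul_assoc, ← Matrix.mul_assoc, hU1, Matrix.one_mul,
      Matrix.mul_assoc, hU1, Matrix.mul_one]
  have hDspec : D = U * Matrix.diagonal (fun i => (l i : ℂ)) * star U := hH.spectral_theorem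
  have hconj_mul : ∀ M N : Matrix (Fin d) (Fin d) ℂ,
      (U * M * star U) * (U * N * star U) = U * (M * N) * star U := by
    intro M N
    simp only [Matrix.mul_assoc]
    rw [← Matrix.mul_assoc (star U) U (N * star U), hU2, Matrix.one_mul]
  have hconj_sum : ∀ M : Matrix (Fin d) (Fin d) ℂ,
      U * M * star U = ∑ i, ∑ j, M i j • (U * Matrix.single i j 1 * star U) := by
    intro M
    conv_lhs => rw [Matrix.matrix_eq_sum_single M]
    simp only [Matrix.mul_sum, Matrix.sum_mul]
    refine Finset.sum_congr rfl fun i _ => Finset.sum_congr rfl fun j _ => ?_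
    rw [show Matrix.single i j (M i j) = M i j • Matrix.single i j (1:ℂ) by
      rw [Matrix.smul_single, smul_eq_mul, mul_one]]
    rw [Matrix.mul_smul, Matrix.smul_mul]
  -- pointwise identity of the integrand
  have hpt : ∀ t ∈ Set.Ioi (0:ℝ),
      (D + (t : ℂ) • 1)⁻¹ * (D * X - X * D) * (D + (t : ℂ) • 1)⁻¹
        = ∑ i, ∑ j, (((l i : ℂ) + t)⁻¹ * ((l i : ℂ) - (l j : ℂ)) * ((l j : ℂ) + t)⁻¹ * Y i j)
            • (U * Matrix.single i j 1 * star U) := by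
    intro t ht
    have ht0 : (0:ℝ) < t := ht
    have hne : ∀ i, ((l i : ℂ) + t) ≠ 0 := by
      intro i
      have : ((l i : ℂ) + t) = ((l i + t : ℝ) : ℂ) := by push_cast; ring
      rw [this, Ne, Complex.ofReal_eq_zero]
      nlinarith [hlpos i]
    have hDt : D + (t : ℂ) • 1 = U * Matrix.diagonal (fun i => (l i : ℂ) + t) * star U := by
      have h1 : (t : ℂ) • (1 : Matrix (Fin d) (Fin d) ℂ)
          = U * ((t : ℂ) • (1 : Matrix (Fin d) (Fin d) ℂ)) * star U := by
        rw [Matrix.mul_smul, Matrix.smul_mul, Matrix.mul_one, hU1]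
      rw [hDspec]
      nth_rewrite 1 [h1]
      rw [← Matrix.add_mul, ← Matrix.mul_add, Matrix.smul_one_eq_diagonal, ← Matrix.diagonal_add]
    have hInv : (D + (t : ℂ) • 1)⁻¹
        = U * Matrix.diagonal (fun i => ((l i : ℂ) + t)⁻¹) * star U := by
      rw [hDt]
      apply Matrix.inv_eq_right_inv
      rw [hconj_mul, Matrix.diagonal_mul_diagonal]
      have : (fun i => ((l i : ℂ) + t) * ((l i : ℂ) + t)⁻¹) = fun _ => (1:ℂ) := by
        funext i; exact mul_inv_cancel₀ (hne i)
      rw [this, Matrix.diagonal_one, Matrix.mul_one, hU1]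
    have hComm : D * X - X * D
        = U * (Matrix.diagonal (fun i => (l i : ℂ)) * Y
            - Y * Matrix.diagonal (fun i => (l i : ℂ))) * star U := by
      nth_rewrite 1 [hDspec, hX, hX, hDspec]
      rw [hconj_mul, hconj_mul, ← sub_mul, ← Matrix.mul_sub]
    rw [hInv, hComm, hconj_mul, hconj_mul,
      hconj_sum (Matrix.diagonal (fun i => ((l i : ℂ) + t)⁻¹) *
        (Matrix.diagonal (fun i => (l i : ℂ)) * Y - Y * Matrix.diagonal (fun i => (l i : ℂ))) *
        Matrix.diagonal (fun i => ((l i : ℂ) + t)⁻¹))]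
    refine Finset.sum_congr rfl fun i _ => Finset.sum_congr rfl fun j _ => ?_
    congr 1
    simp [Matrix.diagonal_mul, Matrix.mul_diagonal, Matrix.sub_apply]
    ring
  rw [MeasureTheory.setIntegral_congr_fun measurableSet_Ioi hpt]
  letI : ContinuousENorm (Matrix (Fin d) (Fin d) ℂ) := SeminormedAddGroup.toContinuousENorm
  have hint : ∀ i j : Fin d, MeasureTheory.Integrable
      (fun t : ℝ => ((((l i : ℂ) + t)⁻¹ * ((l i : ℂ) - (l j : ℂ)) * ((l j : ℂ) + t)⁻¹ * Y i j)
        • (U * Matrix.single i j 1 * star U) : Matrix (Fin d) (Fin d) ℂ))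
      (MeasureTheory.volume.restrict (Set.Ioi 0)) := by
    intro i j
    exact (((key_integrable_complex (hlpos i) (hlpos j)).mul_const (Y i j)).smul_const _)
  rw [MeasureTheory.integral_finset_sum _
    (fun i _ => MeasureTheory.integrable_finset_sum _ (fun j _ => hint i j))]
  have hterm : ∀ i j : Fin d,
      (∫ t in Set.Ioi (0:ℝ),
          (((l i : ℂ) + t)⁻¹ * ((l i : ℂ) - (l j : ℂ)) * ((l j : ℂ) + t)⁻¹ * Y i j)
            • (U * Matrix.single i j 1 * star U))
        = (((Real.log (l i) : ℂ) - (Real.log (l j) : ℂ)) * Y i j)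
            • (U * Matrix.single i j 1 * star U) := by
    intro i j
    have : (fun t : ℝ =>
        (((l i : ℂ) + t)⁻¹ * ((l i : ℂ) - (l j : ℂ)) * ((l j : ℂ) + t)⁻¹ * Y i j)
          • (U * Matrix.single i j 1 * star U))
        = fun t : ℝ =>
        (((l i : ℂ) + t)⁻¹ * ((l i : ℂ) - (l j : ℂ)) * ((l j : ℂ) + t)⁻¹)
          • (Y i j • (U * Matrix.single i j 1 * star U)) := by
      funext t; rw [smul_smul]
    rw [this, integral_smul_const, key_complex (hlpos i) (hlpos j), smul_smul]
  simp only [MeasureTheory.integral_finset_sum _ (fun j _ => hint _ j), hterm]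
  -- now the RHS
  have hLog : hermApply Real.log D hH
      = U * Matrix.diagonal (fun i => (Real.log (l i) : ℂ)) * star U := rfl
  rw [hLog]
  rw [hX]
  rw [hconj_mul, hconj_mul, ← sub_mul, ← Matrix.mul_sub,
    hconj_sum (Matrix.diagonal (fun i => (Real.log (l i) : ℂ)) * Y
      - Y * Matrix.diagonal (fun i => (Real.log (l i) : ℂ)))]
  refine Finset.sum_congr rfl fun i _ => Finset.sum_congr rfl fun j _ => ?_
  congr 1
  simp [Matrix.diagonal_mul, Matrix.mul_diagonal, Matrix.sub_apply]
  ring
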